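/- (Auxiliary model, output equation.) Suppose Γ_Y1 ∈ ℝ^{p×pL} satisfies Γ_Y1 𝒪 = C A^L and set Γ_U1 := C 𝒞 − Γ_Y1 G. Let v : ℕ → ℝ^p be any measurement-noise sequence and define the measured output y_t := y°_t + v_t. Then for every t ≥ L, y_t = 𝐂 𝐱_t + v_t, where 𝐱_t := col(u_{[t-L,t)}, y°_{[t-L,t)}, ρ_{[t-L,t)}) and 𝐂 := [Γ_U1 | Γ_Y1 | F − Γ_Y1 E] ∈ ℝ^{p×(mL+pL+pL²)}. -/

import Mathlib

open Matrix
open scoped Kronecker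

noncomputable section

/-- Stacked window `z_{[t-L,t)} = col(z_{t-L}, …, z_{t-1})`; block `i` is `z_{t-L+i}`. -/
def stackWin (L : ℕ) {d : Type*} (z : ℕ → d → ℝ) (t : ℕ) : Fin L × d → ℝ :=
  fun q => z (t - L + (q.1 : ℕ)) q.2

/-- Reversed controllability-type matrix `𝒞 = [A^{L-1}B, …, AB, B]`. -/
def ctrbMat (n m L : ℕ) (A : Matrix (Fin n) (Fin n) ℝ) (B : Matrix (Fin n) (Fin m) ℝ) :
    Matrix (Fin n) (Fin L × Fin m) ℝ :=
  Matrix.of fun r q => (A ^ (L - 1 - (q.1 : ℕ)) * B) r q.2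

/-- `𝒞_W = [A^{L-1}, …, A, I_n]`. -/
def ctrbWMat (n L : ℕ) (A : Matrix (Fin n) (Fin n) ℝ) :
    Matrix (Fin n) (Fin L × Fin n) ℝ :=
  Matrix.of fun r q => (A ^ (L - 1 - (q.1 : ℕ))) r q.2

/-- Extended observability matrix `𝒪 = col(C, CA, …, CA^{L-1})`. -/
def obsvMat (n p L : ℕ) (A : Matrix (Fin n) (Fin n) ℝ) (C : Matrix (Fin p) (Fin n) ℝ) :
    Matrix (Fin L × Fin p) (Fin n) ℝ :=
  Matrix.of fun q c => (C * A ^ (q.1 : ℕ)) q.2 c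

/-- Strictly lower block-triangular Toeplitz matrix `G`: block `(i,j)` is `C A^{i-j-1} B` for
`j < i` and `0` otherwise. -/
def toepG (n m p L : ℕ) (A : Matrix (Fin n) (Fin n) ℝ) (B : Matrix (Fin n) (Fin m) ℝ)
    (C : Matrix (Fin p) (Fin n) ℝ) : Matrix (Fin L × Fin p) (Fin L × Fin m) ℝ :=
  Matrix.of fun q r =>
    if (r.1 : ℕ) < (q.1 : ℕ) then (C * A ^ ((q.1 : ℕ) - (r.1 : ℕ) - 1) * B) q.2 r.2 else 0

/-- `G_W`: block `(i,j)` is `C A^{i-j-1}` for `j < i` and `0` otherwise. -/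
def toepGW (n p L : ℕ) (A : Matrix (Fin n) (Fin n) ℝ) (C : Matrix (Fin p) (Fin n) ℝ) :
    Matrix (Fin L × Fin p) (Fin L × Fin n) ℝ :=
  Matrix.of fun q r =>
    if (r.1 : ℕ) < (q.1 : ℕ) then (C * A ^ ((q.1 : ℕ) - (r.1 : ℕ) - 1)) q.2 r.2 else 0

/-- `E`: block `(i,j)` is the selection matrix `S_{i-j}` (picking block `i-j-1` in 0-based
indexing) for `j < i` and `0` otherwise. -/
def selE (p L : ℕ) : Matrix (Fin L × Fin p) (Fin L × (Fin L × Fin p)) ℝ :=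
  Matrix.of fun q r =>
    if (r.1 : ℕ) < (q.1 : ℕ) ∧ (r.2.1 : ℕ) = (q.1 : ℕ) - (r.1 : ℕ) - 1 ∧ q.2 = r.2.2
    then 1 else 0

/-- `F = [S_L, S_{L-1}, …, S_1]`: block `j` (0-based) picks block `L-1-j` (0-based). -/
def selF (p L : ℕ) : Matrix (Fin p) (Fin L × (Fin L × Fin p)) ℝ :=
  Matrix.of fun a r => if (r.2.1 : ℕ) = L - 1 - (r.1 : ℕ) ∧ a = r.2.2 then 1 else 0

/-- `ρ_t := 𝒪 w_t`. -/
def rhoSig (n p L : ℕ) (A : Matrix (Fin n) (Fin n) ℝ) (C : Matrix (Fin p) (Fin n) ℝ)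
    (w : ℕ → Fin n → ℝ) (t : ℕ) : Fin L × Fin p → ℝ :=
  (obsvMat n p L A C).mulVec (w t)

/-- Index type for the auxiliary state: `u`-block (size `mL`), `y°`-block (size `pL`),
`ρ`-block (size `pL²`). -/
abbrev AuxIdx (m p L : ℕ) := (Fin L × Fin m) ⊕ ((Fin L × Fin p) ⊕ (Fin L × (Fin L × Fin p)))

/-- The auxiliary system matrix `𝐀` (with `W = F − Γ_Y1 E` in the paper). -/
def auxA (m p L : ℕ) (ΓU : Matrix (Fin p) (Fin L × Fin m) ℝ)
    (ΓY : Matrix (Fin p) (Fin L × Fin p) ℝ)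
    (W : Matrix (Fin p) (Fin L × (Fin L × Fin p)) ℝ) :
    Matrix (AuxIdx m p L) (AuxIdx m p L) ℝ :=
  Matrix.of fun r c =>
    match r, c with
    | Sum.inl q, Sum.inl q' => if (q'.1 : ℕ) = (q.1 : ℕ) + 1 ∧ q.2 = q'.2 then 1 else 0
    | Sum.inl _, Sum.inr _ => 0
    | Sum.inr (Sum.inl q), Sum.inl q' =>
        if (q.1 : ℕ) = L - 1 then ΓU q.2 q' else 0
    | Sum.inr (Sum.inl q), Sum.inr (Sum.inl q') =>
        if (q.1 : ℕ) = L - 1 then ΓY q.2 q'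
        else if (q'.1 : ℕ) = (q.1 : ℕ) + 1 ∧ q.2 = q'.2 then 1 else 0
    | Sum.inr (Sum.inl q), Sum.inr (Sum.inr r') =>
        if (q.1 : ℕ) = L - 1 then W q.2 r' else 0
    | Sum.inr (Sum.inr _), Sum.inl _ => 0
    | Sum.inr (Sum.inr _), Sum.inr (Sum.inl _) => 0
    | Sum.inr (Sum.inr q), Sum.inr (Sum.inr q') =>
        if (q'.1 : ℕ) = (q.1 : ℕ) + 1 ∧ q.2 = q'.2 then 1 else 0

/-- The auxiliary input matrix `𝐁 = col(0_{m(L-1)×m}, I_m, 0, 0)`. -/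
def auxB (m p L : ℕ) : Matrix (AuxIdx m p L) (Fin m) ℝ :=
  Matrix.of fun r c =>
    match r with
    | Sum.inl q => if (q.1 : ℕ) = L - 1 ∧ q.2 = c then 1 else 0
    | Sum.inr _ => 0

/-- The auxiliary output matrix `𝐂 = [Γ_U1 | Γ_Y1 | F − Γ_Y1 E]` (with `W = F − Γ_Y1 E`). -/
def auxC (m p L : ℕ) (ΓU : Matrix (Fin p) (Fin L × Fin m) ℝ)
    (ΓY : Matrix (Fin p) (Fin L × Fin p) ℝ)
    (W : Matrix (Fin p) (Fin L × (Fin L × Fin p)) ℝ) :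
    Matrix (Fin p) (AuxIdx m p L) ℝ :=
  Matrix.of fun a c =>
    match c with
    | Sum.inl q => ΓU a q
    | Sum.inr (Sum.inl q) => ΓY a q
    | Sum.inr (Sum.inr q) => W a q

/-- The auxiliary state `𝐱_t = col(u_{[t-L,t)}, y°_{[t-L,t)}, ρ_{[t-L,t)})`. -/
def auxState (n m p L : ℕ) (A : Matrix (Fin n) (Fin n) ℝ) (C : Matrix (Fin p) (Fin n) ℝ)
    (u : ℕ → Fin m → ℝ) (y : ℕ → Fin p → ℝ) (w : ℕ → Fin n → ℝ) (t : ℕ) :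
    AuxIdx m p L → ℝ :=
  Sum.elim (stackWin L u t) (Sum.elim (stackWin L y t) (stackWin L (rhoSig n p L A C w) t))

/-- The auxiliary disturbance `𝐰_t = col(0, 0, 0_{pL(L-1)}, ρ_t)`. -/
def auxW (n m p L : ℕ) (A : Matrix (Fin n) (Fin n) ℝ) (C : Matrix (Fin p) (Fin n) ℝ)
    (w : ℕ → Fin n → ℝ) (t : ℕ) : AuxIdx m p L → ℝ :=
  Sum.elim 0 (Sum.elim 0 fun q =>
    if (q.1 : ℕ) = L - 1 then rhoSig n p L A C w t q.2 else 0)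

/-- A real square matrix is Schur stable if all its complex eigenvalues have modulus `< 1`. -/
def SchurStable {ι : Type*} [Fintype ι] [DecidableEq ι] (M : Matrix ι ι ℝ) : Prop :=
  ∀ z ∈ spectrum ℂ (M.map (algebraMap ℝ ℂ)), ‖z‖ < 1



lemma sum_ite_range {M : Type*} [AddCommMonoid M] {L i : ℕ} (hi : i ≤ L) (g : ℕ → M) :
    ∑ j ∈ Finset.range L, (if j < i then g j else 0) = ∑ j ∈ Finset.range i, g j := by
  have h1 : ∑ j ∈ Finset.range i, (if j < i then g j else 0)
      = ∑ j ∈ Finset.range L, (if j < i then g j else 0) :=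
    Finset.sum_subset (Finset.range_subset_range.mpr hi)
      (fun j _ hj => if_neg (fun h => hj (Finset.mem_range.mpr h)))
  rw [← h1]
  exact Finset.sum_congr rfl fun j hj => if_pos (Finset.mem_range.mp hj)

lemma sum_fin_ite_lt {M : Type*} [AddCommMonoid M] {L i : ℕ} (hi : i ≤ L) (g : ℕ → M) :
    ∑ j : Fin L, (if (j : ℕ) < i then g (j : ℕ) else 0) = ∑ j ∈ Finset.range i, g j := by
  rw [Fin.sum_univ_eq_sum_range (fun j => if j < i then g j else 0) L]
  exact sum_ite_range hi g

lemma sum_fin_ite_eq {M : Type*} [AddCommMonoid M] {L c : ℕ} (hc : c < L) (g : Fin L → M) :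
    ∑ k : Fin L, (if (k : ℕ) = c then g k else 0) = g ⟨c, hc⟩ := by
  rw [Finset.sum_eq_single (⟨c, hc⟩ : Fin L)]
  · exact if_pos rfl
  · exact fun k _ hk => if_neg fun h => hk (Fin.ext h)
  · exact fun h => absurd (Finset.mem_univ _) h

lemma mul_sum_swap {α β : Type*} [Fintype α] [Fintype β] (f : α → ℝ) (M : α → β → ℝ) (v : β → ℝ) :
    ∑ q : β, (∑ q' : α, f q' * M q' q) * v q = ∑ q' : α, f q' * ∑ q : β, M q' q * v q := by
  simp_rw [Finset.sum_mul, Finset.mul_sum, mul_assoc]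
  exact Finset.sum_comm

lemma state_formula {n m : ℕ} (A : Matrix (Fin n) (Fin n) ℝ) (B : Matrix (Fin n) (Fin m) ℝ)
    (x : ℕ → Fin n → ℝ) (u : ℕ → Fin m → ℝ) (w : ℕ → Fin n → ℝ)
    (hdyn : ∀ t, x (t + 1) = A.mulVec (x t) + B.mulVec (u t) + w t)
    (s : ℕ) : ∀ k, x (s + k) = (A ^ k).mulVec (x s)
      + ∑ j ∈ Finset.range k, (A ^ (k - 1 - j)).mulVec (B.mulVec (u (s + j)) + w (s + j)) := by
  intro k
  induction k with
  | zero => simp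
  | succ k ih =>
    rw [← Nat.add_assoc, hdyn, ih, Finset.sum_range_succ, Matrix.mulVec_add]
    have hAS : A.mulVec (∑ j ∈ Finset.range k,
          (A ^ (k - 1 - j)).mulVec (B.mulVec (u (s + j)) + w (s + j)))
        = ∑ j ∈ Finset.range k, (A ^ (k - j)).mulVec (B.mulVec (u (s + j)) + w (s + j)) := by
      rw [show A.mulVec (∑ j ∈ Finset.range k,
            (A ^ (k - 1 - j)).mulVec (B.mulVec (u (s + j)) + w (s + j)))
          = A.mulVecLin (∑ j ∈ Finset.range k,
            (A ^ (k - 1 - j)).mulVec (B.mulVec (u (s + j)) + w (s + j))) from rfl,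
        map_sum]
      refine Finset.sum_congr rfl fun j hj => ?_
      rw [Matrix.mulVecLin_apply, Matrix.mulVec_mulVec, ← pow_succ']
      have hj' := Finset.mem_range.mp hj
      have he : k - 1 - j + 1 = k - j := by omega
      rw [he]
    rw [hAS, Matrix.mulVec_mulVec, ← pow_succ']
    simp only [Nat.add_sub_cancel, Nat.sub_self, pow_zero, Matrix.one_mulVec]
    abel

/-- auxiliary model, output equation: for any measurement noise `v`, the
measured output `y_t = y°_t + v_t` satisfies `y_t = 𝐂 𝐱_t + v_t` for every `t ≥ L`. -/
theorem aux_output_equation (n m p L : ℕ) (hL : 1 ≤ L)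
    (A : Matrix (Fin n) (Fin n) ℝ) (B : Matrix (Fin n) (Fin m) ℝ)
    (C : Matrix (Fin p) (Fin n) ℝ)
    (x : ℕ → Fin n → ℝ) (u : ℕ → Fin m → ℝ) (w : ℕ → Fin n → ℝ) (y : ℕ → Fin p → ℝ)
    (hdyn : ∀ t, x (t + 1) = A.mulVec (x t) + B.mulVec (u t) + w t)
    (hout : ∀ t, y t = C.mulVec (x t))
    (ΓY : Matrix (Fin p) (Fin L × Fin p) ℝ)
    (hΓY : ΓY * obsvMat n p L A C = C * A ^ L)
    (ΓU : Matrix (Fin p) (Fin L × Fin m) ℝ)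
    (hΓU : ΓU = C * ctrbMat n m L A B - ΓY * toepG n m p L A B C)
    (v : ℕ → Fin p → ℝ) :
    ∀ t, L ≤ t →
      y t + v t
        = (auxC m p L ΓU ΓY (selF p L - ΓY * selE p L)).mulVec
            (auxState n m p L A C u y w t) + v t := by
  intro t ht
  have hst : t - L + L = t := Nat.sub_add_cancel ht
  set s := t - L with hs
  -- output formula over the window
  have yf : ∀ i : ℕ, y (s + i) = (C * A ^ i).mulVec (x s)
      + ∑ j ∈ Finset.range i,
          (C * A ^ (i - 1 - j)).mulVec (B.mulVec (u (s + j)) + w (s + j)) := by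
    intro i
    rw [hout, state_formula A B x u w hdyn s i, Matrix.mulVec_add, Matrix.mulVec_mulVec]
    congr 1
    rw [show C.mulVec (∑ j ∈ Finset.range i,
          (A ^ (i - 1 - j)).mulVec (B.mulVec (u (s + j)) + w (s + j)))
        = C.mulVecLin (∑ j ∈ Finset.range i,
          (A ^ (i - 1 - j)).mulVec (B.mulVec (u (s + j)) + w (s + j))) from rfl, map_sum]
    exact Finset.sum_congr rfl fun j _ => by
      rw [Matrix.mulVecLin_apply, Matrix.mulVec_mulVec]
  have key : y t = (auxC m p L ΓU ΓY (selF p L - ΓY * selE p L)).mulVec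
      (auxState n m p L A C u y w t) := by
    funext a
    simp only [Matrix.mulVec, dotProduct, auxC, auxState, Fintype.sum_sum_type,
      Sum.elim_inl, Sum.elim_inr, Matrix.of_apply, stackWin]
    rw [← hs]
    set g : Fin L × (Fin L × Fin p) → ℝ :=
      fun r => rhoSig n p L A C w (s + (r.1 : ℕ)) r.2 with hg
    -- block computations
    have hCc : ∑ q : Fin L × Fin m, (C * ctrbMat n m L A B) a q * u (s + (q.1 : ℕ)) q.2
        = ∑ j ∈ Finset.range L, ((C * A ^ (L - 1 - j) * B).mulVec (u (s + j))) a := by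
      rw [Fintype.sum_prod_type,
        ← Fin.sum_univ_eq_sum_range (fun j => ((C * A ^ (L - 1 - j) * B).mulVec (u (s + j))) a) L]
      refine Finset.sum_congr rfl fun j _ => ?_
      have hent : ∀ c, (C * ctrbMat n m L A B) a (j, c)
          = (C * A ^ (L - 1 - (j : ℕ)) * B) a c := by
        intro c
        rw [Matrix.mul_assoc]
        simp [Matrix.mul_apply, ctrbMat]
      simp only [Matrix.mulVec, dotProduct]
      exact Finset.sum_congr rfl fun c _ => by rw [hent c]
    have hO : ∑ q : Fin L × Fin p, ΓY a q * ((C * A ^ (q.1 : ℕ)).mulVec (x s)) q.2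
        = ((C * A ^ L).mulVec (x s)) a := by
      rw [← hΓY, ← Matrix.mulVec_mulVec]
      simp only [Matrix.mulVec, dotProduct]
      refine (Finset.sum_congr rfl fun q _ => ?_).symm
      congr 1
    have htG : ∀ q' : Fin L × Fin p,
        ∑ q : Fin L × Fin m, toepG n m p L A B C q' q * u (s + (q.1 : ℕ)) q.2
        = ∑ j ∈ Finset.range (q'.1 : ℕ),
            ((C * A ^ ((q'.1 : ℕ) - 1 - j) * B).mulVec (u (s + j))) q'.2 := by
      rintro ⟨i, b⟩
      rw [Fintype.sum_prod_type,
        ← sum_fin_ite_lt i.isLt.le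
          (g := fun j => ((C * A ^ ((i : ℕ) - 1 - j) * B).mulVec (u (s + j))) b)]
      refine Finset.sum_congr rfl fun j _ => ?_
      by_cases hj : (j : ℕ) < (i : ℕ)
      · rw [if_pos hj]
        have he : (i : ℕ) - (j : ℕ) - 1 = (i : ℕ) - 1 - (j : ℕ) := by omega
        simp only [Matrix.mulVec, dotProduct, toepG, Matrix.of_apply]
        refine Finset.sum_congr rfl fun c _ => ?_
        rw [if_pos hj, he]
      · rw [if_neg hj]
        refine Finset.sum_eq_zero fun c _ => ?_
        simp only [toepG, Matrix.of_apply]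
        rw [if_neg hj, zero_mul]
    have hE : ∀ q' : Fin L × Fin p,
        ∑ r : Fin L × (Fin L × Fin p), selE p L q' r * g r
        = ∑ j ∈ Finset.range (q'.1 : ℕ),
            ((C * A ^ ((q'.1 : ℕ) - 1 - j)).mulVec (w (s + j))) q'.2 := by
      rintro ⟨i, b⟩
      rw [Fintype.sum_prod_type,
        ← sum_fin_ite_lt i.isLt.le
          (g := fun j => ((C * A ^ ((i : ℕ) - 1 - j)).mulVec (w (s + j))) b)]
      refine Finset.sum_congr rfl fun j _ => ?_
      by_cases hj : (j : ℕ) < (i : ℕ)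
      · rw [if_pos hj]
        have hkl : (i : ℕ) - (j : ℕ) - 1 < L := by omega
        have step1 : ∑ r : Fin L × Fin p, selE p L (i, b) (j, r) * g (j, r)
            = ∑ k : Fin L, (if (k : ℕ) = (i : ℕ) - (j : ℕ) - 1 then g (j, (k, b)) else 0) := by
          rw [Fintype.sum_prod_type]
          refine Finset.sum_congr rfl fun k _ => ?_
          by_cases hk : (k : ℕ) = (i : ℕ) - (j : ℕ) - 1
          · rw [if_pos hk]
            have hsel : ∀ c, selE p L (i, b) (j, (k, c)) = if b = c then 1 else 0 := by
              intro c
              simp only [selE, Matrix.of_apply, hj, hk, true_and]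
            simp only [hsel, ite_mul, one_mul, zero_mul]
            rw [Finset.sum_ite_eq]
            simp
          · rw [if_neg hk]
            refine Finset.sum_eq_zero fun c _ => ?_
            simp only [selE, Matrix.of_apply]
            rw [if_neg (fun h => hk h.2.1), zero_mul]
        rw [step1, sum_fin_ite_eq hkl]
        have he : (i : ℕ) - (j : ℕ) - 1 = (i : ℕ) - 1 - (j : ℕ) := by omega
        simp [hg, rhoSig, obsvMat, Matrix.mulVec, dotProduct, he]
      · rw [if_neg hj]
        refine Finset.sum_eq_zero fun r _ => ?_
        simp only [selE, Matrix.of_apply]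
        rw [if_neg (fun h => hj h.1), zero_mul]
    have hF : ∑ r : Fin L × (Fin L × Fin p), selF p L a r * g r
        = ∑ j ∈ Finset.range L, ((C * A ^ (L - 1 - j)).mulVec (w (s + j))) a := by
      rw [Fintype.sum_prod_type,
        ← Fin.sum_univ_eq_sum_range (fun j => ((C * A ^ (L - 1 - j)).mulVec (w (s + j))) a) L]
      refine Finset.sum_congr rfl fun j _ => ?_
      have hkl : L - 1 - (j : ℕ) < L := by omega
      have step1 : ∑ r : Fin L × Fin p, selF p L a (j, r) * g (j, r)
          = ∑ k : Fin L, (if (k : ℕ) = L - 1 - (j : ℕ) then g (j, (k, a)) else 0) := by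
        rw [Fintype.sum_prod_type]
        refine Finset.sum_congr rfl fun k _ => ?_
        by_cases hk : (k : ℕ) = L - 1 - (j : ℕ)
        · rw [if_pos hk]
          have hsel : ∀ c, selF p L a (j, (k, c)) = if a = c then 1 else 0 := by
            intro c
            simp only [selF, Matrix.of_apply, hk, true_and]
          simp only [hsel, ite_mul, one_mul, zero_mul]
          rw [Finset.sum_ite_eq]
          simp
        · rw [if_neg hk]
          refine Finset.sum_eq_zero fun c _ => ?_
          simp only [selF, Matrix.of_apply]
          rw [if_neg (fun h => hk h.1), zero_mul]
      rw [step1, sum_fin_ite_eq hkl]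
      simp [hg, rhoSig, obsvMat, Matrix.mulVec, dotProduct]
    -- the two cancelling cross terms
    have hswapG : ∑ q : Fin L × Fin m, (ΓY * toepG n m p L A B C) a q * u (s + (q.1 : ℕ)) q.2
        = ∑ q' : Fin L × Fin p, ΓY a q' * ∑ j ∈ Finset.range (q'.1 : ℕ),
            ((C * A ^ ((q'.1 : ℕ) - 1 - j) * B).mulVec (u (s + j))) q'.2 := by
      simp only [Matrix.mul_apply]
      refine (mul_sum_swap (fun q' => ΓY a q') (fun q' q => toepG n m p L A B C q' q)
        (fun q => u (s + (q.1 : ℕ)) q.2)).trans ?_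
      exact Finset.sum_congr rfl fun q' _ => by rw [htG q']
    have hswapE : ∑ r : Fin L × (Fin L × Fin p), (ΓY * selE p L) a r * g r
        = ∑ q' : Fin L × Fin p, ΓY a q' * ∑ j ∈ Finset.range (q'.1 : ℕ),
            ((C * A ^ ((q'.1 : ℕ) - 1 - j)).mulVec (w (s + j))) q'.2 := by
      simp only [Matrix.mul_apply]
      refine (mul_sum_swap (fun q' => ΓY a q') (fun q' r => selE p L q' r) g).trans ?_
      exact Finset.sum_congr rfl fun q' _ => by rw [hE q']
    -- T_U
    have hU : ∑ q : Fin L × Fin m, ΓU a q * u (s + (q.1 : ℕ)) q.2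
        = (∑ j ∈ Finset.range L, ((C * A ^ (L - 1 - j) * B).mulVec (u (s + j))) a)
          - ∑ q' : Fin L × Fin p, ΓY a q' * ∑ j ∈ Finset.range (q'.1 : ℕ),
              ((C * A ^ ((q'.1 : ℕ) - 1 - j) * B).mulVec (u (s + j))) q'.2 := by
      rw [← hCc, ← hswapG, ← Finset.sum_sub_distrib]
      refine Finset.sum_congr rfl fun q _ => ?_
      rw [hΓU, Matrix.sub_apply, sub_mul]
    -- T_Y
    have hY : ∑ q : Fin L × Fin p, ΓY a q * y (s + (q.1 : ℕ)) q.2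
        = ((C * A ^ L).mulVec (x s)) a
          + ((∑ q' : Fin L × Fin p, ΓY a q' * ∑ j ∈ Finset.range (q'.1 : ℕ),
              ((C * A ^ ((q'.1 : ℕ) - 1 - j) * B).mulVec (u (s + j))) q'.2)
          + ∑ q' : Fin L × Fin p, ΓY a q' * ∑ j ∈ Finset.range (q'.1 : ℕ),
              ((C * A ^ ((q'.1 : ℕ) - 1 - j)).mulVec (w (s + j))) q'.2) := by
      rw [← hO, ← Finset.sum_add_distrib, ← Finset.sum_add_distrib]
      refine Finset.sum_congr rfl fun q _ => ?_
      rw [yf (q.1 : ℕ)]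
      simp only [Pi.add_apply, Finset.sum_apply]
      rw [← mul_add, ← mul_add]
      congr 1
      congr 1
      rw [← Finset.sum_add_distrib]
      refine Finset.sum_congr rfl fun j _ => ?_
      rw [Matrix.mulVec_add, Matrix.mulVec_mulVec, Pi.add_apply]
    -- T_rho
    have hR : ∑ r : Fin L × (Fin L × Fin p), (selF p L - ΓY * selE p L) a r * g r
        = (∑ j ∈ Finset.range L, ((C * A ^ (L - 1 - j)).mulVec (w (s + j))) a)
          - ∑ q' : Fin L × Fin p, ΓY a q' * ∑ j ∈ Finset.range (q'.1 : ℕ),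
              ((C * A ^ ((q'.1 : ℕ) - 1 - j)).mulVec (w (s + j))) q'.2 := by
      rw [← hF, ← hswapE, ← Finset.sum_sub_distrib]
      refine Finset.sum_congr rfl fun r _ => ?_
      rw [Matrix.sub_apply, sub_mul]
    -- LHS
    have hLHS : y t a = ((C * A ^ L).mulVec (x s)) a
        + ((∑ j ∈ Finset.range L, ((C * A ^ (L - 1 - j) * B).mulVec (u (s + j))) a)
        + ∑ j ∈ Finset.range L, ((C * A ^ (L - 1 - j)).mulVec (w (s + j))) a) := by
      conv_lhs => rw [← hst, yf L]
      simp only [Pi.add_apply, Finset.sum_apply]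
      congr 1
      rw [← Finset.sum_add_distrib]
      refine Finset.sum_congr rfl fun j _ => ?_
      rw [Matrix.mulVec_add, Matrix.mulVec_mulVec, Pi.add_apply]
    rw [hLHS, hU, hY, hR]
    ring
  rw [key]

end
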